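/- Let G be a finite group with a normal 2-subgroup Q such that G/Q ≅ S₃ and every element of order 3 in G acts on Q without non-trivial fixed points. Then G splits over Q and all complements to Q in G are conjugate. -/

import Mathlib

open Pointwise

private lemma aux_normal_of_index_two {H : Type*} [Group H] (K : Subgroup H)
    (h : K.index = 2) : K.Normal := by
  constructor
  intro s hs x
  rw [Subgroup.mul_mem_iff_of_index_two h, Subgroup.mul_mem_iff_of_index_two h,
    Subgroup.inv_mem_iff]
  tauto

/-- Let `G` be a finite group with a normal 2-subgroup `Q` such that
`G/Q ≅ S₃` and every element of order 3 in `G` acts on `Q` without non-trivial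
fixed points.  Then `G` splits over `Q` and all complements to `Q` in `G` are
conjugate. -/
theorem stmt0 (G : Type*) [Group G] [Fintype G] (Q : Subgroup G) [Q.Normal]
    (hQ2 : IsPGroup 2 Q)
    (hquot : Nonempty ((G ⧸ Q) ≃* Equiv.Perm (Fin 3)))
    (hfpf : ∀ g : G, orderOf g = 3 → ∀ q ∈ Q, g * q * g⁻¹ = q → q = 1) :
    (∃ L : Subgroup G, Q.IsComplement' L) ∧
      (∀ L₁ L₂ : Subgroup G, Q.IsComplement' L₁ → Q.IsComplement' L₂ →
        ∃ g : G, L₂ = L₁.map (MulAut.conj g).toMonoidHom) := by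
  classical
  haveI f3 : Fact (Nat.Prime 3) := ⟨by norm_num⟩
  haveI f2 : Fact (Nat.Prime 2) := ⟨by norm_num⟩
  have hq6 : Q.index = 6 := by
    rw [Subgroup.index_eq_card, Nat.card_congr hquot.some.toEquiv]
    norm_num [Nat.card_eq_fintype_card, Fintype.card_perm, Nat.factorial]
  obtain ⟨k, hk⟩ := IsPGroup.iff_card.mp hQ2
  have hcardG : Nat.card G = 2 ^ k * 6 := by
    rw [← Q.card_mul_index, hk, hq6]
  have hQpos : (0:ℕ) < 2 ^ k := pow_pos two_pos k
  -- any subgroup of cardinality 3 is Sylow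
  have mkSylow : ∀ S : Subgroup G, Nat.card S = 3 → ∃ P : Sylow 3 G, (P : Subgroup G) = S := by
    intro S hS
    have hp1 : IsPGroup 3 S := IsPGroup.of_card (by rw [hS, pow_one])
    have hidx : S.index = 2 ^ k * 2 := by
      have h1 := S.card_mul_index
      rw [hS, hcardG] at h1
      omega
    have hp2 : ¬ (3 ∣ S.index) := by
      rw [hidx]
      intro h
      have h1 : (3:ℕ) ∣ 2 ^ (k+1) := by rwa [pow_succ]
      have h2 := Nat.Prime.dvd_of_dvd_pow f3.out h1
      norm_num at h2
    exact ⟨hp1.toSylow hp2, rfl⟩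
  -- Sylow 3-subgroups have cardinality 3
  have hfact : (Nat.card G).factorization 3 = 1 := by
    have h6 : Nat.card G = 2 ^ (k+1) * 3 := by rw [hcardG]; ring
    rw [h6, Nat.factorization_mul (by positivity) (by norm_num)]
    simp [Nat.Prime.factorization_pow, Finsupp.single_apply, Nat.Prime.factorization,
      Nat.factorization_eq_zero_of_not_dvd (show ¬(3 ∣ 2) by norm_num),
      Nat.Prime.factorization_self (show Nat.Prime 3 by norm_num)]
  have hcardP : ∀ P : Sylow 3 G, Nat.card (P : Subgroup G) = 3 := by
    intro P
    rw [P.card_eq_multiplicity, hfact, pow_one]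
  -- the key claim: the normalizer of any Sylow 3-subgroup is a complement to Q
  have compl : ∀ P : Sylow 3 G, Q.IsComplement' (Subgroup.normalizer (P : Subgroup G)) := by
    intro P
    have hdisj : Disjoint Q (P : Subgroup G) :=
      IsPGroup.disjoint_of_ne 2 3 (by norm_num) _ _ hQ2 P.2
    obtain ⟨g₀, hg₀⟩ := exists_prime_orderOf_dvd_card (G := ↥(P : Subgroup G)) 3
      (by rw [← Nat.card_eq_fintype_card, hcardP P])
    have hgord : orderOf (g₀ : G) = 3 := by rw [Subgroup.orderOf_coe]; exact hg₀
    have hgP : (g₀ : G) ∈ (P : Subgroup G) := g₀.2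
    -- trivial intersection
    have hbot : Q ⊓ Subgroup.normalizer (P : Subgroup G) = ⊥ := by
      rw [eq_bot_iff]
      intro x hx
      obtain ⟨hxQ, hxN⟩ := Subgroup.mem_inf.mp hx
      rw [Subgroup.mem_normalizer_iff] at hxN
      have h1 : x * g₀ * x⁻¹ ∈ (P : Subgroup G) := (hxN (g₀ : G)).mp hgP
      have hc : x * g₀ * x⁻¹ * (g₀ : G)⁻¹ ∈ (P : Subgroup G) := mul_mem h1 (inv_mem hgP)
      have hcQ : x * g₀ * x⁻¹ * (g₀ : G)⁻¹ ∈ Q := by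
        have h2 : (g₀ : G) * x⁻¹ * (g₀ : G)⁻¹ ∈ Q :=
          Subgroup.Normal.conj_mem ‹Q.Normal› _ (inv_mem hxQ) (g₀ : G)
        have h3 := mul_mem hxQ h2
        simpa [mul_assoc] using h3
      have hone : x * g₀ * x⁻¹ * (g₀ : G)⁻¹ = 1 := Subgroup.disjoint_def.mp hdisj hcQ hc
      have h1 : x * g₀ * x⁻¹ = (g₀ : G) := by
        have h2 := mul_eq_one_iff_eq_inv.mp hone
        simpa using h2
      have hx1 : x * (g₀ : G) = (g₀ : G) * x := by
        conv_rhs => rw [← h1]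
        group
      have hcomm : (g₀ : G) * x * (g₀ : G)⁻¹ = x := by
        rw [← hx1, mul_assoc, mul_inv_cancel, mul_one]
      have := hfpf (g₀ : G) hgord x hxQ hcomm
      simpa [Subgroup.mem_bot] using this
    -- Frattini: normalizer ⊔ Q = ⊤
    have htop : Q ⊔ Subgroup.normalizer (P : Subgroup G) = ⊤ := by
      set f := (QuotientGroup.mk' Q).comp (P : Subgroup G).subtype with hf
      have hfinj : Function.Injective f := by
        refine (MonoidHom.ker_eq_bot_iff f).mp ?_
        rw [eq_bot_iff]
        rintro ⟨x, hx⟩ hker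
        have hxQ : x ∈ Q := by
          rwa [MonoidHom.mem_ker, hf, MonoidHom.comp_apply, QuotientGroup.mk'_apply,
            QuotientGroup.eq_one_iff] at hker
        have hx1 : x = 1 := Subgroup.disjoint_def.mp hdisj hxQ hx
        simpa [Subgroup.mem_bot, Subtype.ext_iff] using hx1
      set Pbar := Subgroup.map (QuotientGroup.mk' Q) (P : Subgroup G) with hPbar
      have hrange : f.range = Pbar := by
        rw [hf, MonoidHom.range_comp, Subgroup.range_subtype]
      have hPbarcard : Nat.card Pbar = 3 := by
        have e1 : Nat.card Pbar = Nat.card ↥(Set.range ⇑f) := by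
          rw [← hrange]
          exact Nat.card_congr (Equiv.setCongr f.coe_range)
        have e2 : Nat.card ↥(Set.range ⇑f) = Nat.card (P : Subgroup G) :=
          Nat.card_congr (Equiv.ofInjective ⇑f hfinj).symm
        rw [e1, e2]
        exact hcardP P
      have hPbaridx : Pbar.index = 2 := by
        have h1 := Pbar.card_mul_index
        rw [hPbarcard, ← Subgroup.index_eq_card, hq6] at h1
        omega
      haveI : Pbar.Normal := aux_normal_of_index_two Pbar hPbaridx
      haveI : (Subgroup.comap (QuotientGroup.mk' Q) Pbar).Normal :=
        Subgroup.Normal.comap ‹Pbar.Normal› _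
      have hM : Subgroup.comap (QuotientGroup.mk' Q) Pbar = (P : Subgroup G) ⊔ Q := by
        rw [hPbar, Subgroup.comap_map_eq, QuotientGroup.ker_mk']
      have hPle : (P : Subgroup G) ≤ Subgroup.comap (QuotientGroup.mk' Q) Pbar := by
        rw [hM]; exact le_sup_left
      have hfr := Sylow.normalizer_sup_eq_top' P hPle
      rw [hM, ← sup_assoc, sup_eq_left.mpr (show (P : Subgroup G) ≤ Subgroup.normalizer (SetLike.coe P) from
        Subgroup.le_normalizer)] at hfr
      rw [sup_comm]
      exact hfr
    have hmul : ((Q : Set G) * ((Subgroup.normalizer (P : Subgroup G) : Subgroup G) : Set G)) = Set.univ := by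
      rw [← Subgroup.normal_mul, htop, Subgroup.coe_top]
    exact Subgroup.isComplement'_of_disjoint_and_mul_eq_univ (disjoint_iff.mpr hbot) hmul
  -- cardinality of any complement is 6
  have cardL : ∀ L : Subgroup G, Q.IsComplement' L → Nat.card L = 6 := by
    intro L hL
    have h1 := hL.card_mul
    rw [hk, hcardG] at h1
    exact Nat.eq_of_mul_eq_mul_left hQpos h1
  -- a subgroup of card 6 normalizes its card-3 subgroups
  have norm_le : ∀ (L S : Subgroup G), S ≤ L → Nat.card L = 6 → Nat.card S = 3 →
      L ≤ Subgroup.normalizer S := by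
    intro L S hSL hcL hcS x hx
    have hidx : (S.subgroupOf L).index = 2 := by
      have h1 : Nat.card (S.subgroupOf L) = 3 := by
        rw [← hcS]
        exact Nat.card_congr (Subgroup.subgroupOfEquivOfLe hSL).toEquiv
      have h2 := (S.subgroupOf L).card_mul_index
      rw [h1, hcL] at h2
      omega
    rw [Subgroup.mem_normalizer_iff]
    intro h
    constructor
    · intro hh
      have hhL : h ∈ L := hSL hh
      have key : (⟨x, hx⟩ * ⟨h, hhL⟩ * (⟨x, hx⟩ : L)⁻¹) ∈ S.subgroupOf L := by
        rw [Subgroup.mul_mem_iff_of_index_two hidx, Subgroup.mul_mem_iff_of_index_two hidx,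
          Subgroup.inv_mem_iff]
        have hmem : (⟨h, hhL⟩ : L) ∈ S.subgroupOf L := by
          rwa [Subgroup.mem_subgroupOf]
        tauto
      rwa [Subgroup.mem_subgroupOf] at key
    · intro hh
      have h1 : x * h * x⁻¹ ∈ L := hSL hh
      have hhL : h ∈ L := by
        have h2 := mul_mem (mul_mem (inv_mem hx) h1) hx
        have e : x⁻¹ * (x * h * x⁻¹) * x = h := by group
        rwa [e] at h2
      have key : (⟨x, hx⟩ * ⟨h, hhL⟩ * (⟨x, hx⟩ : L)⁻¹) ∈ S.subgroupOf L := by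
        rw [Subgroup.mem_subgroupOf]
        exact hh
      rw [Subgroup.mul_mem_iff_of_index_two hidx, Subgroup.mul_mem_iff_of_index_two hidx,
        Subgroup.inv_mem_iff] at key
      have hmem : (⟨h, hhL⟩ : L) ∈ S.subgroupOf L ↔ h ∈ S := by
        rw [Subgroup.mem_subgroupOf]
      rw [← hmem]
      tauto
  constructor
  · exact ⟨_, compl (Sylow.nonempty (p := 3) (G := G)).some⟩
  · intro L₁ L₂ hc₁ hc₂
    have hcard₁ := cardL L₁ hc₁
    have hcard₂ := cardL L₂ hc₂
    obtain ⟨x₁, hx₁⟩ := exists_prime_orderOf_dvd_card (G := ↥L₁) 3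
      (by rw [← Nat.card_eq_fintype_card, hcard₁]; norm_num)
    obtain ⟨x₂, hx₂⟩ := exists_prime_orderOf_dvd_card (G := ↥L₂) 3
      (by rw [← Nat.card_eq_fintype_card, hcard₂]; norm_num)
    set S₁ := Subgroup.zpowers (x₁ : G) with hS₁
    set S₂ := Subgroup.zpowers (x₂ : G) with hS₂
    have hS₁card : Nat.card S₁ = 3 := by
      rw [hS₁, Nat.card_zpowers, Subgroup.orderOf_coe, hx₁]
    have hS₂card : Nat.card S₂ = 3 := by
      rw [hS₂, Nat.card_zpowers, Subgroup.orderOf_coe, hx₂]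
    have hS₁le : S₁ ≤ L₁ := by rw [hS₁, Subgroup.zpowers_le]; exact x₁.2
    have hS₂le : S₂ ≤ L₂ := by rw [hS₂, Subgroup.zpowers_le]; exact x₂.2
    obtain ⟨P₁, hP₁⟩ := mkSylow S₁ hS₁card
    obtain ⟨P₂, hP₂⟩ := mkSylow S₂ hS₂card
    obtain ⟨g, hg⟩ := MulAction.exists_smul_eq G P₁ P₂
    have hmap : S₁.map (MulAut.conj g).toMonoidHom = S₂ := by
      rw [← hP₁, ← hP₂, ← hg]
      rw [Sylow.coe_subgroup_smul, Subgroup.pointwise_smul_def]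
      rfl
    have hN6 : Nat.card (Subgroup.normalizer ((P₂ : Subgroup G) : Set G)) = 6 := by
      have h1 := (compl P₂).card_mul
      rw [hk, hcardG] at h1
      exact Nat.eq_of_mul_eq_mul_left hQpos h1
    have hL₂N : L₂ ≤ Subgroup.normalizer ((P₂ : Subgroup G) : Set G) := by
      rw [hP₂]; exact norm_le L₂ S₂ hS₂le hcard₂ hS₂card
    have hL₂eq : L₂ = Subgroup.normalizer ((P₂ : Subgroup G) : Set G) :=
      Subgroup.eq_of_le_of_card_ge hL₂N (by rw [hN6, hcard₂])
    refine ⟨g, ?_⟩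
    have hbij : Function.Bijective (MulAut.conj g).toMonoidHom :=
      (MulAut.conj g).bijective
    have hmaple : L₁.map (MulAut.conj g).toMonoidHom ≤ Subgroup.normalizer S₂ := by
      calc L₁.map (MulAut.conj g).toMonoidHom
          ≤ (Subgroup.normalizer S₁).map (MulAut.conj g).toMonoidHom :=
            Subgroup.map_mono (norm_le L₁ S₁ hS₁le hcard₁ hS₁card)
        _ = Subgroup.normalizer (S₁.map (MulAut.conj g).toMonoidHom) :=
            Subgroup.map_normalizer_eq_of_bijective S₁ hbij
        _ = Subgroup.normalizer S₂ := by rw [hmap]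
    have hmapcard : Nat.card (L₁.map (MulAut.conj g).toMonoidHom) = 6 := by
      rw [← hcard₁]
      exact (Nat.card_congr (Subgroup.equivMapOfInjective L₁ _ hbij.injective).toEquiv).symm
    rw [hL₂eq, hP₂]
    exact (Subgroup.eq_of_le_of_card_ge hmaple (by rw [hmapcard, ← hP₂, hN6])).symm
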